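/- Gordan's Lemma (saturation is finite): Let G be a finitely generated abelian group and Q a finitely generated submonoid of G. Let P = {g ∈ G : n • g ∈ Q for some integer n > 0} be the saturation of Q in G. Then P is a finitely generated Q-module: there exists a finite subset S ⊆ P such that every p ∈ P can be written as p = q + s with q ∈ Q and s ∈ S. -/

import Mathlib

open Set

/-- From a PWO set, extract a finite "basis" of lower bounds. -/
lemma aux_pwo_basis {α : Type*} [Preorder α] {s : Set α} (h : s.IsPWO) :
    ∃ B : Finset α, ↑B ⊆ s ∧ ∀ a ∈ s, ∃ b ∈ B, b ≤ a := by
  classical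
  by_contra hcon
  push_neg at hcon
  have hbad : ∀ B : Finset α, ∃ a, ↑B ⊆ s → (a ∈ s ∧ ∀ b ∈ B, ¬ b ≤ a) := by
    intro B
    by_cases hB : (B : Set α) ⊆ s
    · obtain ⟨a, ha, ha2⟩ := hcon B hB
      exact ⟨a, fun _ => ⟨ha, fun b hb hba => ha2 b hb hba⟩⟩
    · rcases hcon ∅ (by simp) with ⟨a, ha, -⟩
      exact ⟨a, fun h' => absurd h' hB⟩
  choose F hF using hbad
  set g : ℕ → Finset α := fun n => Nat.rec ∅ (fun _ B => insert (F B) B) n with hg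
  have hgsucc : ∀ n, g (n + 1) = insert (F (g n)) (g n) := fun n => rfl
  have hgsub : ∀ n, ↑(g n) ⊆ s := by
    intro n
    induction n with
    | zero => simp [hg]
    | succ n ih =>
      rw [hgsucc]
      intro x hx
      simp only [Finset.coe_insert, Set.mem_insert_iff] at hx
      rcases hx with rfl | hx
      · exact (hF (g n) ih).1
      · exact ih hx
  have hmono : ∀ m n, m ≤ n → g m ⊆ g n := by
    intro m n hmn
    induction n with
    | zero => simp [Nat.le_zero.mp hmn]
    | succ n ih =>
      rcases Nat.lt_or_ge m (n+1) with h' | h'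
      · rw [hgsucc]
        exact (ih (Nat.lt_succ_iff.mp h')).trans (Finset.subset_insert _ _)
      · have : m = n + 1 := le_antisymm hmn h'
        simp [this]
  set f : ℕ → α := fun n => F (g n) with hf
  have hfs : ∀ n, f n ∈ s := fun n => (hF (g n) (hgsub n)).1
  obtain ⟨m, n, hmn, hle⟩ := h.exists_lt hfs
  have : f m ∈ g n := hmono (m+1) n hmn (by rw [hgsucc]; exact Finset.mem_insert_self _ _)
  exact (hF (g n) (hgsub n)).2 _ this hle
lemma aux_closure_rep {G : Type*} [AddCommMonoid G] (Y : Finset G) {g : G}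
    (hg : g ∈ AddSubmonoid.closure (Y : Set G)) :
    ∃ a : Y →₀ ℕ, g = ∑ y ∈ Y.attach, a y • (y : G) := by
  classical
  induction hg using AddSubmonoid.closure_induction with
  | mem x hx =>
    have hx' : x ∈ Y := hx
    refine ⟨Finsupp.single ⟨x, hx'⟩ 1, ?_⟩
    simp [Finsupp.single_apply, ite_smul]
  | zero => exact ⟨0, by simp⟩
  | add x y hx hy ihx ihy =>
    obtain ⟨a, ha⟩ := ihx
    obtain ⟨b, hb⟩ := ihy
    exact ⟨a + b, by simp [ha, hb, add_nsmul, Finset.sum_add_distrib]⟩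

lemma aux_ideal_fg {G : Type*} [AddCommMonoid G] (Q : AddSubmonoid G) (hQ : Q.FG)
    (T : Set G) (hTQ : T ⊆ ↑Q) :
    ∃ B : Finset G, ↑B ⊆ T ∧ ∀ t ∈ T, ∃ b ∈ B, ∃ q ∈ Q, t = q + b := by
  classical
  obtain ⟨Y, hY⟩ := hQ
  set π : (Y →₀ ℕ) → G := fun a => ∑ y ∈ Y.attach, a y • (y : G) with hπ
  have hadd : ∀ a b : Y →₀ ℕ, π (a + b) = π a + π b := by
    intro a b
    simp [hπ, add_nsmul, Finset.sum_add_distrib]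
  have hπQ : ∀ a, π a ∈ Q := by
    intro a
    refine AddSubmonoid.sum_mem _ fun y _ => AddSubmonoid.nsmul_mem _ ?_ _
    rw [← hY]; exact AddSubmonoid.subset_closure y.2
  set A : Set (Y →₀ ℕ) := {a | π a ∈ T} with hA
  obtain ⟨B₀, hB₀A, hB₀cov⟩ := aux_pwo_basis (Set.isPWO_of_wellQuasiOrderedLE A)
  refine ⟨B₀.image π, ?_, ?_⟩
  · intro x hx
    simp only [Finset.coe_image, Set.mem_image] at hx
    obtain ⟨b₀, hb₀, rfl⟩ := hx
    exact hB₀A hb₀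
  · intro t ht
    obtain ⟨a, rfl⟩ : ∃ a, π a = t := by
      obtain ⟨a, ha⟩ := aux_closure_rep Y (by rw [hY]; exact hTQ ht)
      exact ⟨a, ha.symm⟩
    obtain ⟨b₀, hb₀, hle⟩ := hB₀cov a ht
    refine ⟨π b₀, Finset.mem_image_of_mem _ hb₀, π (a - b₀), hπQ _, ?_⟩
    rw [← hadd, tsub_add_cancel_of_le hle]
lemma aux_core (G : Type*) [AddCommGroup G] (hG : AddGroup.FG G)
    (Q : AddSubmonoid G) (hQ : Q.FG)
    (P : Set G) (hP : P = {g : G | ∃ n : ℕ, 0 < n ∧ n • g ∈ Q}) :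
    ∃ D : Finset G, ∀ p ∈ P, ∃ q ∈ Q, ∃ d ∈ D, p = q + d := by
  classical
  obtain ⟨Y, hY⟩ := hQ
  obtain ⟨n, ι, hι, pr, hpr, e, ⟨f⟩⟩ := AddCommGroup.equiv_free_prod_directSum_zmod G
  set φ : G →+ (Fin n →₀ ℤ) := (AddMonoidHom.fst _ _).comp f.toAddMonoidHom with hφ
  -- the kernel of φ is finite
  set K : Set G := {g : G | φ g = 0} with hK
  have hKfin : K.Finite := by
    haveI : ∀ i, NeZero (pr i ^ e i) := fun i => ⟨pow_ne_zero _ (hpr i).ne_zero⟩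
    haveI : Finite (DirectSum ι fun i => ZMod (pr i ^ e i)) := by
      haveI : Fintype (Π₀ i : ι, ZMod (pr i ^ e i)) := DFinsupp.fintype
      exact inferInstanceAs (Finite (Π₀ i : ι, ZMod (pr i ^ e i)))
    have : Finite ↥K := by
      refine Finite.of_injective (fun k : K => (f (k : G)).2) ?_
      rintro ⟨k, hk⟩ ⟨k', hk'⟩ h
      simp only at h
      have h1 : (f k).1 = (f k').1 := by
        have hk0 : (f k).1 = 0 := hk
        have hk'0 : (f k').1 = 0 := hk'
        rw [hk0, hk'0]
      have : f k = f k' := Prod.ext h1 h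
      exact Subtype.ext (f.injective this)
    exact Set.toFinite K
  -- the candidate set
  set D : Set G := {g : G | ∃ m : ℕ, 0 < m ∧ ∃ r : Y → ℕ, (∀ y, r y ≤ m) ∧
      m • g = ∑ y ∈ Y.attach, r y • (y : G)} with hD
  -- bound : images of D under φ lie in a finite box
  set M : Fin n → ℤ := fun j => ∑ y ∈ Y.attach, |φ (y : G) j| with hM
  set box : Set (Fin n →₀ ℤ) := {v | ∀ j, |v j| ≤ M j} with hbox
  have hboxfin : box.Finite := by
    have hpi : (Set.univ.pi fun j : Fin n => Set.Icc (-M j) (M j)).Finite :=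
      Set.Finite.pi fun j => Set.finite_Icc _ _
    refine Set.Finite.of_finite_image (f := fun v : Fin n →₀ ℤ => (v : Fin n → ℤ)) ?_ ?_
    · refine hpi.subset ?_
      rintro w ⟨v, hv, rfl⟩
      intro j _
      exact abs_le.mp (hv j)
    · exact fun a _ b _ h => DFunLike.coe_injective h
  have hφD : ∀ g ∈ D, φ g ∈ box := by
    rintro g ⟨m, hm, r, hr, hsum⟩ j
    have h1 : m • (φ g j) = ∑ y ∈ Y.attach, r y • (φ (y : G) j) := by
      have := congrArg (fun x => φ x j) hsum
      simpa [map_nsmul, map_sum, Finsupp.smul_apply, Finsupp.finset_sum_apply] using this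
    have h2 : |(m : ℤ) * φ g j| ≤ (m : ℤ) * M j := by
      rw [← nsmul_eq_mul, h1]
      calc |∑ y ∈ Y.attach, r y • (φ (y : G) j)|
          ≤ ∑ y ∈ Y.attach, |r y • (φ (y : G) j)| := Finset.abs_sum_le_sum_abs _ _
        _ ≤ ∑ y ∈ Y.attach, (m : ℤ) * |φ (y : G) j| := by
            refine Finset.sum_le_sum fun y _ => ?_
            rw [nsmul_eq_mul, abs_mul, Nat.abs_cast]
            exact mul_le_mul_of_nonneg_right (by exact_mod_cast hr y) (abs_nonneg _)
        _ = (m : ℤ) * M j := by rw [hM, Finset.mul_sum]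
    have hm' : (0 : ℤ) < (m : ℤ) := by exact_mod_cast hm
    rw [abs_mul, abs_of_pos hm'] at h2
    exact le_of_mul_le_mul_left h2 hm'
  -- D is finite
  have hDfin : D.Finite := by
    have himfin : (φ '' D).Finite := hboxfin.subset (by rintro _ ⟨g, hg, rfl⟩; exact hφD g hg)
    have : D ⊆ ⋃ v ∈ φ '' D, {g ∈ D | φ g = v} := by
      intro g hg
      exact Set.mem_biUnion (Set.mem_image_of_mem φ hg) ⟨hg, rfl⟩
    refine (Set.Finite.biUnion himfin ?_).subset this
    intro v _
    by_cases hne : ({g ∈ D | φ g = v} : Set G).Nonempty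
    · obtain ⟨g₀, hg₀D, hg₀v⟩ := hne
      refine (hKfin.image (fun k => g₀ + k)).subset ?_
      rintro g ⟨hgD, hgv⟩
      refine ⟨g - g₀, ?_, by show g₀ + (g - g₀) = g; rw [add_comm, sub_add_cancel]⟩
      show φ (g - g₀) = 0
      rw [map_sub, hgv, hg₀v, sub_self]
    · rw [Set.not_nonempty_iff_eq_empty] at hne
      rw [hne]; exact Set.finite_empty
  -- covering
  refine ⟨hDfin.toFinset, ?_⟩
  intro p hp
  rw [hP] at hp
  obtain ⟨m, hm, hmem⟩ := hp
  obtain ⟨a, ha⟩ := aux_closure_rep Y (show m • p ∈ AddSubmonoid.closure (Y : Set G) by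
    rw [hY]; exact hmem)
  set q : G := ∑ y ∈ Y.attach, (a y / m) • (y : G) with hq
  have hqQ : q ∈ Q := by
    refine AddSubmonoid.sum_mem _ fun y _ => AddSubmonoid.nsmul_mem _ ?_ _
    rw [← hY]; exact AddSubmonoid.subset_closure y.2
  refine ⟨q, hqQ, p - q, ?_, by abel⟩
  rw [Set.Finite.mem_toFinset]
  refine ⟨m, hm, fun y => a y % m, fun y => le_of_lt (Nat.mod_lt _ hm), ?_⟩
  have key : m • p = m • q + ∑ y ∈ Y.attach, (a y % m) • (y : G) := by
    rw [ha, hq, Finset.smul_sum, ← Finset.sum_add_distrib]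
    refine Finset.sum_congr rfl fun y _ => ?_
    rw [smul_smul, ← add_nsmul, Nat.div_add_mod]
  rw [smul_sub, key]
  abel
/-- **Gordan's Lemma (saturation is finite).** Let `G` be a finitely generated abelian
group and `Q` a finitely generated submonoid of `G`.  Let
`P = {g ∈ G : n • g ∈ Q for some n > 0}` be the saturation of `Q` in `G`.  Then `P` is a
finitely generated `Q`-module: there is a finite subset `S ⊆ P` such that every `p ∈ P`
can be written as `p = q + s` with `q ∈ Q` and `s ∈ S`. -/
theorem gordan_saturation_finitely_generated
    (G : Type*) [AddCommGroup G] (hG : AddGroup.FG G)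
    (Q : AddSubmonoid G) (hQ : Q.FG)
    (P : Set G) (hP : P = {g : G | ∃ n : ℕ, 0 < n ∧ n • g ∈ Q}) :
    ∃ S : Finset G, ↑S ⊆ P ∧ ∀ p ∈ P, ∃ q ∈ Q, ∃ s ∈ S, p = q + s := by
  classical
  obtain ⟨D, hD⟩ := aux_core G hG Q hQ P hP
  set T : G → Set G := fun d => {q : G | q ∈ Q ∧ q + d ∈ P} with hT
  have hBex : ∀ d : G, ∃ B : Finset G, ↑B ⊆ T d ∧
      ∀ t ∈ T d, ∃ b ∈ B, ∃ q ∈ Q, t = q + b :=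
    fun d => aux_ideal_fg Q hQ (T d) (fun x hx => hx.1)
  choose B hB1 hB2 using hBex
  refine ⟨D.biUnion (fun d => (B d).image (· + d)), ?_, ?_⟩
  · intro x hx
    simp only [Finset.coe_biUnion, Finset.coe_image, Set.mem_iUnion, Set.mem_image,
      Finset.mem_coe] at hx
    obtain ⟨d, _, b, hb, rfl⟩ := hx
    exact (hB1 d hb).2
  · intro p hp
    obtain ⟨q, hq, d, hd, rfl⟩ := hD p hp
    have hqT : q ∈ T d := ⟨hq, hp⟩
    obtain ⟨b, hb, q', hq', rfl⟩ := hB2 d q hqT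
    refine ⟨q', hq', b + d, ?_, by rw [add_assoc]⟩
    exact Finset.mem_biUnion.mpr ⟨d, hd, Finset.mem_image_of_mem _ hb⟩
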